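/- Let D be a Karoubian triangulated category and D_0 ⊂ D a dense strictly full triangulated subcategory with D_0 ≠ D. Then D_0 does not admit a bounded t-structure. -/

import Mathlib

/-!
STATEMENT 11: Let D be a Karoubian (idempotent complete) triangulated category and
D₀ ⊂ D a dense strictly full triangulated subcategory with D₀ ≠ D. Then D₀ does not
admit a bounded t-structure. (Since the full subcategory D₀ is not known to Mathlib
as a pretriangulated category, a bounded t-structure on D₀ is formalized below as the
evident structure `SubBoundedTStructure`, mirroring Mathlib's `TStructure` with all
data and axioms taking place inside D₀ ⊂ D.)
-/

open CategoryTheory Limits Pretriangulated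

universe v u

variable (C : Type u) [Category.{v} C] [Preadditive C] [HasZeroObject C]
  [HasShift C ℤ] [∀ n : ℤ, (shiftFunctor C n).Additive] [Pretriangulated C]

/-- Mathlib's former `Triangulated.Subcategory` (removed upstream), restated with its
old definition. -/
structure Triangulated.Subcategory where
  P : ObjectProperty C
  zero' : ∃ (Z : C) (_ : IsZero Z), P Z
  shift (X : C) (n : ℤ) : P X → P (X⟦n⟧)
  ext₂' (T : Triangle C) (_ : T ∈ distTriang C) : P T.obj₁ → P T.obj₃ → P.isoClosure T.obj₂

/-- A bounded t-structure on a (strictly full) triangulated subcategory `S` of a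
pretriangulated category `C`. -/
structure SubBoundedTStructure (S : Triangulated.Subcategory C) where
  /-- the predicate of objects of the subcategory that are `≤ n` -/
  LE : ℤ → C → Prop
  /-- the predicate of objects of the subcategory that are `≥ n` -/
  GE : ℤ → C → Prop
  LE_sub : ∀ (n : ℤ) (X : C), LE n X → S.P X
  GE_sub : ∀ (n : ℤ) (X : C), GE n X → S.P X
  LE_iso : ∀ (n : ℤ) (X Y : C), (X ≅ Y) → LE n X → LE n Y
  GE_iso : ∀ (n : ℤ) (X Y : C), (X ≅ Y) → GE n X → GE n Y
  LE_shift : ∀ (n a n' : ℤ), a + n' = n → ∀ X : C, LE n X → LE n' (X⟦a⟧)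
  GE_shift : ∀ (n a n' : ℤ), a + n' = n → ∀ X : C, GE n X → GE n' (X⟦a⟧)
  zero : ∀ (X Y : C) (f : X ⟶ Y), LE 0 X → GE 1 Y → f = 0
  LE_zero_le : ∀ X : C, LE 0 X → LE 1 X
  GE_one_le : ∀ X : C, GE 1 X → GE 0 X
  exists_triangle_zero_one : ∀ A : C, S.P A → ∃ (X Y : C) (_ : LE 0 X) (_ : GE 1 Y)
    (f : X ⟶ A) (g : A ⟶ Y) (h : Y ⟶ X⟦(1 : ℤ)⟧), Triangle.mk f g h ∈ distTriang C
  bounded : ∀ X : C, S.P X → ∃ n : ℕ, LE n X ∧ GE (-(n : ℤ)) X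

namespace stmt11Aux

variable {C}

/-- The product over `Bool` is a binary biproduct. -/
noncomputable def prodBoolIso (f : Bool → C) :
    (∏ᶜ f : C) ≅ f true ⊞ f false where
  hom := biprod.lift (Pi.π f true) (Pi.π f false)
  inv := Pi.lift (fun b => match b with
    | true => biprod.fst
    | false => biprod.snd)
  hom_inv_id := by
    apply Pi.hom_ext
    rintro (_|_) <;> simp
  inv_hom_id := by
    apply biprod.hom_ext <;> simp

/-- Splitting off a zero summand. -/
noncomputable def zeroBiprodIso {Z W : C} (hZ : IsZero Z) : (Z ⊞ W : C) ≅ W where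
  hom := biprod.snd
  inv := biprod.inr
  hom_inv_id := by
    apply biprod.hom_ext'
    · apply hZ.eq_of_src
    · simp
  inv_hom_id := by simp

/-- An equality of shifts induces an isomorphism. -/
def shiftIso (X : C) {a b : ℤ} (h : a = b) : (X⟦a⟧ : C) ≅ X⟦b⟧ :=
  eqToIso (by rw [h])

lemma ext₃ (S : Triangulated.Subcategory C) [ObjectProperty.IsClosedUnderIsomorphisms S.P]
    (T : Triangle C) (hT : T ∈ distTriang C) (h1 : S.P T.obj₁) (h2 : S.P T.obj₂) :
    S.P T.obj₃ := by
  have := S.ext₂' T.rotate (rot_of_distTriang _ hT) h2 (S.shift _ 1 h1)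
  rwa [S.P.isoClosure_eq_self] at this

/-- Key lemma: if `U ⊞ R` and `U ⊞ Z` belong to a triangulated subcategory closed under
isomorphisms, then so does `Z ⊞ R⟦1⟧`. -/
lemma key (S : Triangulated.Subcategory C) [ObjectProperty.IsClosedUnderIsomorphisms S.P]
    (U Z R : C) (h1 : S.P (U ⊞ R)) (h2 : S.P (U ⊞ Z)) :
    S.P (Z ⊞ R⟦(1 : ℤ)⟧) := by
  let T : Bool → Triangle C := fun b =>
    bif b then contractibleTriangle U
    else (binaryBiproductTriangle Z (R⟦(1 : ℤ)⟧)).invRotate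
  have hT : ∀ b, T b ∈ distTriang C := by
    rintro (_|_)
    · exact inv_rot_of_distTriang _ (binaryBiproductTriangle_distinguished _ _)
    · exact contractible_distinguished U
  have hprod := productTriangle_distinguished T hT
  have e1 : (productTriangle T).obj₁ ≅ U ⊞ R :=
    prodBoolIso (fun b => (T b).obj₁) ≪≫
      biprod.mapIso (Iso.refl U) ((shiftEquiv C (1 : ℤ)).unitIso.symm.app R)
  have e2 : (productTriangle T).obj₂ ≅ U ⊞ Z :=
    prodBoolIso (fun b => (T b).obj₂)
  have e3 : (productTriangle T).obj₃ ≅ Z ⊞ R⟦(1 : ℤ)⟧ :=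
    prodBoolIso (fun b => (T b).obj₃) ≪≫ zeroBiprodIso (isZero_zero C)
  have h3 := ext₃ S _ hprod (ObjectProperty.prop_of_iso S.P e1.symm h1) (ObjectProperty.prop_of_iso S.P e2.symm h2)
  exact ObjectProperty.prop_of_iso S.P e3 h3

variable {S : Triangulated.Subcategory C} (t : SubBoundedTStructure C S)

lemma le_mono {n m : ℤ} (h : n ≤ m) {X : C} (hX : t.LE n X) : t.LE m X := by
  obtain ⟨d, rfl⟩ : ∃ d : ℕ, m = n + d := ⟨(m - n).toNat, by omega⟩
  clear h
  induction d with
  | zero => simpa using hX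
  | succ d ih =>
    have h0 : t.LE 0 (X⟦n + (d : ℤ)⟧) := t.LE_shift (n + d) (n + d) 0 (by ring) X ih
    have h1 : t.LE 1 (X⟦n + (d : ℤ)⟧) := t.LE_zero_le _ h0
    have h2 : t.LE (n + (d : ℤ) + 1) ((X⟦n + (d : ℤ)⟧)⟦-(n + (d : ℤ))⟧) :=
      t.LE_shift 1 (-(n + (d : ℤ))) (n + (d : ℤ) + 1) (by ring) _ h1
    have h3 := t.LE_iso _ _ _ ((shiftEquiv C (n + (d : ℤ))).unitIso.symm.app X) h2
    have he : n + ((d + 1 : ℕ) : ℤ) = n + (d : ℤ) + 1 := by push_cast; ring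
    rw [he]
    exact h3

lemma ge_anti {n m : ℤ} (h : m ≤ n) {X : C} (hX : t.GE n X) : t.GE m X := by
  obtain ⟨d, rfl⟩ : ∃ d : ℕ, m = n - d := ⟨(n - m).toNat, by omega⟩
  clear h
  induction d with
  | zero => simpa using hX
  | succ d ih =>
    have h1 : t.GE 1 (X⟦n - (d : ℤ) - 1⟧) :=
      t.GE_shift (n - d) (n - (d : ℤ) - 1) 1 (by ring) X ih
    have h0 : t.GE 0 (X⟦n - (d : ℤ) - 1⟧) := t.GE_one_le _ h1
    have h2 : t.GE (n - (d : ℤ) - 1) ((X⟦n - (d : ℤ) - 1⟧)⟦-(n - (d : ℤ) - 1)⟧) :=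
      t.GE_shift 0 (-(n - (d : ℤ) - 1)) (n - (d : ℤ) - 1) (by ring) _ h0
    have h3 := t.GE_iso _ _ _ ((shiftEquiv C (n - (d : ℤ) - 1)).unitIso.symm.app X) h2
    have he : n - ((d + 1 : ℕ) : ℤ) = n - (d : ℤ) - 1 := by push_cast; ring
    rw [he]
    exact h3

lemma zero' {X Y : C} (f : X ⟶ Y) {a b : ℤ} (hab : a < b)
    (hX : t.LE a X) (hY : t.GE b Y) : f = 0 := by
  have hX0 : t.LE 0 (X⟦a⟧) := t.LE_shift a a 0 (by ring) X hX
  have hY1 : t.GE 1 (Y⟦a⟧) :=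
    ge_anti t (by omega) (t.GE_shift b a (b - a) (by ring) Y hY)
  have hz : f⟦a⟧' = 0 := t.zero _ _ _ hX0 hY1
  apply (shiftFunctor C a).map_injective
  rw [hz, Functor.map_zero]

/-- Truncation triangle at an arbitrary degree. -/
lemma trunc (k : ℤ) (A : C) (hA : S.P A) :
    ∃ (P Q : C) (_ : t.LE k P) (_ : t.GE (k + 1) Q) (f : P ⟶ A) (g : A ⟶ Q)
      (h : Q ⟶ P⟦(1 : ℤ)⟧), Triangle.mk f g h ∈ distTriang C := by
  obtain ⟨P₀, Q₀, hP₀, hQ₀, f, g, h, mem⟩ :=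
    t.exists_triangle_zero_one (A⟦k⟧) (S.shift A k hA)
  let T := (Triangle.shiftFunctor C (-k)).obj (Triangle.mk f g h)
  let e := (shiftEquiv C k).unitIso.symm.app A
  have hT' : Triangle.mk (T.mor₁ ≫ e.hom) (e.inv ≫ T.mor₂) T.mor₃ ∈ distTriang C := by
    refine isomorphic_distinguished _ (Triangle.shift_distinguished _ mem (-k)) _ ?_
    refine Triangle.isoMk _ _ (Iso.refl _) e.symm (Iso.refl _) ?_ ?_ ?_
    · change (T.mor₁ ≫ e.hom) ≫ e.inv = 𝟙 _ ≫ T.mor₁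
      exact (Category.assoc _ _ _).trans ((congrArg (fun x => T.mor₁ ≫ x) e.hom_inv_id).trans
        ((Category.comp_id _).trans (Category.id_comp _).symm))
    · change (e.inv ≫ T.mor₂) ≫ 𝟙 _ = e.inv ≫ T.mor₂; simp
    · change T.mor₃ ≫ (shiftFunctor C 1).map (𝟙 _) = 𝟙 _ ≫ T.mor₃; simp
  exact ⟨_, _, t.LE_shift 0 (-k) k (by ring) _ hP₀,
    t.GE_shift 1 (-k) (k + 1) (by ring) _ hQ₀, _, _, _, hT'⟩

end stmt11Aux

theorem stmt11 [IsIdempotentComplete C]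
    (D₀ : Triangulated.Subcategory C) [ObjectProperty.IsClosedUnderIsomorphisms D₀.P]
    (hdense : ∀ X : C, ∃ Y : C, D₀.P (X ⊞ Y))
    (hne : ∃ X : C, ¬ D₀.P X) :
    IsEmpty (SubBoundedTStructure C D₀) := by
  refine ⟨fun t => ?_⟩
  obtain ⟨X₀, hX₀⟩ := hne
  apply hX₀
  suffices hall : ∀ X : C, D₀.P X from hall X₀
  intro X
  -- Step 1: `Z ⊞ Z⟦1⟧ ∈ D₀` for every `Z`.
  have base : ∀ Z : C, D₀.P (Z ⊞ Z⟦(1 : ℤ)⟧) := by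
    intro Z
    obtain ⟨Y, hY⟩ := hdense Z
    have hswap : D₀.P (Y ⊞ Z) := ObjectProperty.prop_of_iso D₀.P (biprod.braiding Z Y) hY
    exact stmt11Aux.key D₀ Y Z Z hswap hswap
  -- Step 2: `X ⊞ X⟦2k+1⟧ ∈ D₀` for every `k : ℕ`.
  have main : ∀ k : ℕ, D₀.P (X ⊞ X⟦(2 * (k : ℤ) + 1)⟧) := by
    intro k
    induction k with
    | zero =>
      have := base X
      exact ObjectProperty.prop_of_iso D₀.P (biprod.mapIso (Iso.refl X)
        (stmt11Aux.shiftIso X (by norm_num))) this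
    | succ k ih =>
      set m : ℤ := 2 * (k : ℤ) + 1 with hm
      have hW : D₀.P (X⟦m⟧ ⊞ X⟦m + 1⟧) := by
        have := base (X⟦m⟧)
        refine ObjectProperty.prop_of_iso D₀.P (biprod.mapIso (Iso.refl _) ?_) this
        exact ((shiftFunctorAdd' C m 1 (m + 1) rfl).app X).symm
      have hXm : D₀.P (X⟦m⟧ ⊞ X) := ObjectProperty.prop_of_iso D₀.P (biprod.braiding X (X⟦m⟧)) ih
      have hkey := stmt11Aux.key D₀ (X⟦m⟧) X (X⟦m + 1⟧) hW hXm
      refine ObjectProperty.prop_of_iso D₀.P (biprod.mapIso (Iso.refl X)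
        (((shiftFunctorAdd' C (m + 1) 1 (m + 1 + 1) rfl).app X).symm ≪≫
          stmt11Aux.shiftIso X (by push_cast; ring))) hkey
  -- Step 3: truncate `X ⊞ X⟦N⟧` to split off `X`.
  obtain ⟨n₀, hle, hge⟩ := t.bounded _ (base X)
  set N : ℤ := 2 * (n₀ : ℤ) + 1 with hN
  have hBN : D₀.P (X ⊞ X⟦N⟧) := main n₀
  set k : ℤ := -(n₀ : ℤ) - 1 with hk
  obtain ⟨P, Q, hP, hQ, f, g, h, hT⟩ := stmt11Aux.trunc t k (X ⊞ X⟦N⟧) hBN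
  -- vanishing lemmas
  have v1 : ∀ φ : P ⟶ X, φ = 0 := by
    intro φ
    have hφ : φ ≫ (biprod.inl : X ⟶ X ⊞ X⟦(1 : ℤ)⟧) = 0 :=
      stmt11Aux.zero' t _ (by omega) hP hge
    calc φ = (φ ≫ biprod.inl) ≫ (biprod.fst : X ⊞ X⟦(1 : ℤ)⟧ ⟶ X) := by simp
    _ = 0 := by rw [hφ, zero_comp]
  have xLE : ∀ (Z : C), t.GE ((n₀ : ℤ) + 1) Z → ∀ ψ : X ⟶ Z, ψ = 0 := by
    intro Z hZ ψ
    have hψ : (biprod.fst : X ⊞ X⟦(1 : ℤ)⟧ ⟶ X) ≫ ψ = 0 :=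
      stmt11Aux.zero' t _ (by omega) hle hZ
    calc ψ = (biprod.inl : X ⟶ X ⊞ X⟦(1 : ℤ)⟧) ≫ (biprod.fst ≫ ψ) := by simp
    _ = 0 := by rw [hψ, comp_zero]
  have v2 : ∀ ψ : X⟦N⟧ ⟶ Q, ψ = 0 := by
    intro ψ
    have hQ' : t.GE ((n₀ : ℤ) + 1) (Q⟦-N⟧) :=
      t.GE_shift (k + 1) (-N) ((n₀ : ℤ) + 1) (by omega) Q hQ
    have h0 : ((shiftEquiv C N).unitIso.hom.app X) ≫ ψ⟦-N⟧' = 0 := xLE _ hQ' _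
    apply (shiftFunctor C (-N)).map_injective
    rw [Functor.map_zero]
    apply (cancel_epi ((shiftEquiv C N).unitIso.hom.app X)).1
    exact h0.trans comp_zero.symm
  have hfp : f ≫ (biprod.fst : X ⊞ X⟦N⟧ ⟶ X) = 0 := v1 _
  have hig : (biprod.inr : X⟦N⟧ ⟶ X ⊞ X⟦N⟧) ≫ g = 0 := v2 _
  obtain ⟨q, hq⟩ : ∃ q : X⟦N⟧ ⟶ P, q ≫ f = biprod.inr := by
    obtain ⟨q₀, hq₀⟩ := Triangle.coyoneda_exact₂ _ hT
      (biprod.inr : X⟦N⟧ ⟶ X ⊞ X⟦N⟧) hig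
    exact ⟨q₀, hq₀.symm⟩
  have v3 : ∀ u : P ⟶ P, u ≫ f = 0 → u = 0 := by
    intro u hu
    obtain ⟨w, hw⟩ := Triangle.coyoneda_exact₂ _
      (inv_rot_of_distTriang _ hT) u hu
    have hw0 : w = 0 := by
      refine stmt11Aux.zero' t _ (show k < k + 2 by omega) hP ?_
      exact t.GE_shift (k + 1) (-1) (k + 2) (by ring) Q hQ
    rw [hw, hw0, zero_comp]
    rfl
  have hq1 : q ≫ (f ≫ (biprod.snd : X ⊞ X⟦N⟧ ⟶ X⟦N⟧)) = 𝟙 (X⟦N⟧) := by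
    rw [← Category.assoc, hq]; simp
  have hq2 : (f ≫ (biprod.snd : X ⊞ X⟦N⟧ ⟶ X⟦N⟧)) ≫ q = 𝟙 P := by
    have hzero : ((f ≫ biprod.snd) ≫ q - 𝟙 P) ≫ f = 0 := by
      have htot : (biprod.fst : X ⊞ X⟦N⟧ ⟶ X) ≫ biprod.inl +
          (biprod.snd : X ⊞ X⟦N⟧ ⟶ X⟦N⟧) ≫ biprod.inr = 𝟙 (X ⊞ X⟦N⟧) := biprod.total
      rw [Preadditive.sub_comp, Category.id_comp, Category.assoc, Category.assoc, hq]
      rw [show (biprod.snd : X ⊞ X⟦N⟧ ⟶ X⟦N⟧) ≫ biprod.inr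
          = 𝟙 (X ⊞ X⟦N⟧) - biprod.fst ≫ biprod.inl by
        rw [← htot]; abel]
      rw [Preadditive.comp_sub, Category.comp_id, ← Category.assoc, hfp, zero_comp, sub_zero,
        sub_self]
    have := v3 _ hzero
    rwa [sub_eq_zero] at this
  have hqiso : IsIso q := ⟨f ≫ biprod.snd, hq1, hq2⟩
  -- the biproduct triangle `X⟦N⟧ ⟶ X ⊞ X⟦N⟧ ⟶ X`
  have hT0 : Triangle.mk (biprod.inr : X⟦N⟧ ⟶ X ⊞ X⟦N⟧)
      (biprod.fst : X ⊞ X⟦N⟧ ⟶ X) 0 ∈ distTriang C := by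
    refine isomorphic_distinguished _
      (binaryBiproductTriangle_distinguished (X⟦N⟧) X) _ ?_
    exact Triangle.isoMk _ _ (Iso.refl _) (biprod.braiding X (X⟦N⟧)) (Iso.refl _)
      (by
        change (biprod.inr : X⟦N⟧ ⟶ X ⊞ X⟦N⟧) ≫ (biprod.braiding X (X⟦N⟧)).hom =
          𝟙 (X⟦N⟧) ≫ biprod.inl
        apply biprod.hom_ext <;> simp)
      (by
        change (biprod.fst : X ⊞ X⟦N⟧ ⟶ X) ≫ 𝟙 X = (biprod.braiding X (X⟦N⟧)).hom ≫ biprod.snd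
        simp)
      (by
        change (0 : X ⟶ X⟦N⟧⟦(1 : ℤ)⟧) ≫ (shiftFunctor C 1).map (𝟙 (X⟦N⟧)) = 𝟙 X ≫ 0
        simp)
  let φm := completeDistinguishedTriangleMorphism _ _ hT0 hT q (𝟙 (X ⊞ X⟦N⟧))
    (by exact (Category.comp_id _).trans hq.symm)
  have h1iso : IsIso φm.hom₁ := hqiso
  have h2iso : IsIso φm.hom₂ := inferInstanceAs (IsIso (𝟙 (X ⊞ (X⟦N⟧ : C))))
  have hiso3 : IsIso φm.hom₃ := isIso₃_of_isIso₁₂ φm hT0 hT h1iso h2iso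
  exact ObjectProperty.prop_of_iso D₀.P (asIso φm.hom₃).symm (t.GE_sub _ _ hQ)
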